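/- Let d ≥ 2, σ > 0, and 0 < δ < σ. Suppose v : Z^d → [0,∞) satisfies sup_{y∈R^d, |y|<σ} Σ_{ξ∈Z^d} e^{-2y·ξ} v(ξ) ≤ M². Then there exists a constant C_δ (depending on δ, σ, d but not on v, M) such that Σ_{ξ∈Z^d} e^{2δ|ξ|} v(ξ) ≤ C_δ M². -/

import Mathlib

open scoped ENNReal BigOperators

set_option maxHeartbeats 800000

/-- Euclidean norm of a lattice point `ξ ∈ ℤ^d`. -/
noncomputable def latNorm {d : ℕ} (ξ : Fin d → ℤ) : ℝ :=
  Real.sqrt (∑ i, ((ξ i : ℝ)) ^ 2)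

/-- Finitely many vectors of norm `≤ δ'` such that every `x` satisfies
`δ * ‖x‖ ≤ ⟪y, x⟫` for some `y` in the family. -/
lemma cone_cover (d : ℕ) (δ δ' : ℝ) (hδ : 0 < δ) (h : δ < δ') :
    ∃ s : Finset (EuclideanSpace ℝ (Fin d)), 0 ∈ s ∧ (∀ y ∈ s, ‖y‖ ≤ δ') ∧
      ∀ x : EuclideanSpace ℝ (Fin d), ∃ y ∈ s, δ * ‖x‖ ≤ (inner ℝ y x : ℝ) := by
  classical
  set E := EuclideanSpace ℝ (Fin d)
  set K : Set E := Metric.sphere 0 1 with hK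
  have hKc : IsCompact K := isCompact_sphere 0 1
  set U : E → Set E := fun u => {w | δ < δ' * (inner ℝ u w : ℝ)} with hU
  have hUopen : ∀ u, IsOpen (U u) := fun u =>
    isOpen_lt continuous_const
      (continuous_const.mul (Continuous.inner continuous_const continuous_id))
  have hcov : K ⊆ ⋃ u ∈ K, U u := by
    intro u hu
    have h1 : ‖u‖ = 1 := by rw [hK, mem_sphere_zero_iff_norm] at hu; exact hu
    refine Set.mem_biUnion hu ?_
    simp only [U, Set.mem_setOf_eq]
    rw [real_inner_self_eq_norm_sq, h1]
    simpa using h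
  obtain ⟨t, htK, htf, htcov⟩ := hKc.elim_finite_subcover_image (fun u _ => hUopen u) hcov
  refine ⟨insert 0 (htf.toFinset.image (δ' • ·)), Finset.mem_insert_self _ _, ?_, ?_⟩
  · intro y hy
    rcases Finset.mem_insert.mp hy with rfl | hy
    · simp; linarith
    · obtain ⟨j, hj, rfl⟩ := Finset.mem_image.mp hy
      have hj1 : ‖j‖ = 1 := by
        have : j ∈ K := htK (htf.mem_toFinset.mp hj)
        rw [hK, mem_sphere_zero_iff_norm] at this; exact this
      rw [norm_smul, hj1]
      simp [Real.norm_eq_abs, abs_of_pos (lt_trans hδ h)]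
  · intro x
    rcases eq_or_ne x 0 with rfl | hx
    · exact ⟨0, Finset.mem_insert_self _ _, by simp⟩
    · have hxn : 0 < ‖x‖ := norm_pos_iff.mpr hx
      set u : E := ‖x‖⁻¹ • x with hu
      have hun : ‖u‖ = 1 := by
        rw [hu, norm_smul, Real.norm_eq_abs, abs_of_pos (inv_pos.mpr hxn)]
        field_simp
      have huK : u ∈ K := by rw [hK, mem_sphere_zero_iff_norm]; exact hun
      obtain ⟨j, hj, hjU⟩ := Set.mem_iUnion₂.mp (htcov huK)
      refine ⟨δ' • j, Finset.mem_insert_of_mem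
        (Finset.mem_image.mpr ⟨j, htf.mem_toFinset.mpr hj, rfl⟩), ?_⟩
      have h2 : δ < δ' * (inner ℝ j u : ℝ) := hjU
      rw [real_inner_smul_left]
      have h3 : (inner ℝ j u : ℝ) = ‖x‖⁻¹ * (inner ℝ j x : ℝ) := by
        rw [hu, real_inner_smul_right]
      rw [h3] at h2
      have h4 := mul_lt_mul_of_pos_right h2 hxn
      calc δ * ‖x‖ ≤ δ' * (‖x‖⁻¹ * inner ℝ j x) * ‖x‖ := le_of_lt h4
        _ = δ' * inner ℝ j x := by field_simp


/-- Let `d ≥ 2`, `0 < δ < σ`. If `v : ℤ^d → [0,∞]` satisfies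
`sup_{|y|<σ} Σ_ξ e^{-2y·ξ} v(ξ) ≤ M²`, then `Σ_ξ e^{2δ|ξ|} v(ξ) ≤ C_δ M²`,
with `C_δ` independent of `v` and `M`. -/
theorem statement3 (d : ℕ) (hd : 2 ≤ d) (σ δ : ℝ) (hσ : 0 < σ) (hδ : 0 < δ)
    (hδσ : δ < σ) :
    ∃ C : ℝ, 0 < C ∧ ∀ (v : (Fin d → ℤ) → ℝ≥0∞) (M : ℝ),
      (∀ y : Fin d → ℝ, Real.sqrt (∑ i, (y i) ^ 2) < σ →
        (∑' ξ : Fin d → ℤ,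
            ENNReal.ofReal (Real.exp (-2 * ∑ i, y i * (ξ i : ℝ))) * v ξ)
          ≤ ENNReal.ofReal (M ^ 2)) →
      (∑' ξ : Fin d → ℤ, ENNReal.ofReal (Real.exp (2 * δ * latNorm ξ)) * v ξ)
        ≤ ENNReal.ofReal C * ENNReal.ofReal (M ^ 2) := by
  classical
  set δ' : ℝ := (δ + σ) / 2 with hδ'def
  have hδδ' : δ < δ' := by rw [hδ'def]; linarith
  have hδ'σ : δ' < σ := by rw [hδ'def]; linarith
  obtain ⟨s, h0s, hsn, hscov⟩ := cone_cover d δ δ' hδ hδδ'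
  refine ⟨s.card, by exact_mod_cast Finset.card_pos.mpr ⟨0, h0s⟩, ?_⟩
  intro v M hv
  have key : ∀ ξ : Fin d → ℤ,
      ENNReal.ofReal (Real.exp (2 * δ * latNorm ξ)) ≤
      ∑ y ∈ s, ENNReal.ofReal (Real.exp (-2 * ∑ i, (-(y i)) * (ξ i : ℝ))) := by
    intro ξ
    set x : EuclideanSpace ℝ (Fin d) := (WithLp.equiv 2 _).symm (fun i => (ξ i : ℝ)) with hx
    obtain ⟨y, hy, hyx⟩ := hscov x
    have hnorm : latNorm ξ = ‖x‖ := by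
      rw [EuclideanSpace.norm_eq, latNorm]
      congr 1
      refine Finset.sum_congr rfl fun i _ => ?_
      simp [hx, Real.norm_eq_abs, sq_abs]
    have hinner : (inner ℝ y x : ℝ) = ∑ i, y i * (ξ i : ℝ) := by
      rw [PiLp.inner_apply]
      refine Finset.sum_congr rfl fun i _ => ?_
      simp [hx, RCLike.inner_apply, mul_comm]
    have hterm : ENNReal.ofReal (Real.exp (2 * δ * latNorm ξ)) ≤
        ENNReal.ofReal (Real.exp (-2 * ∑ i, (-(y i)) * (ξ i : ℝ))) := by
      apply ENNReal.ofReal_le_ofReal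
      apply Real.exp_le_exp.mpr
      have hsum : ∑ i, (-(y i)) * (ξ i : ℝ) = -∑ i, y i * (ξ i : ℝ) := by
        rw [← Finset.sum_neg_distrib]
        exact Finset.sum_congr rfl fun i _ => by ring
      rw [hsum, hnorm]
      have := hyx
      rw [hinner] at this
      nlinarith
    exact le_trans hterm (Finset.single_le_sum (f := fun z : EuclideanSpace ℝ (Fin d) =>
        ENNReal.ofReal (Real.exp (-2 * ∑ i, (-(z i)) * (ξ i : ℝ)))) (fun z _ => zero_le) hy)
  calc ∑' ξ : Fin d → ℤ, ENNReal.ofReal (Real.exp (2 * δ * latNorm ξ)) * v ξ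
      ≤ ∑' ξ : Fin d → ℤ, (∑ y ∈ s,
          ENNReal.ofReal (Real.exp (-2 * ∑ i, (-(y i)) * (ξ i : ℝ)))) * v ξ :=
        ENNReal.tsum_le_tsum fun ξ => mul_le_mul_left (key ξ) _
    _ = ∑' ξ : Fin d → ℤ, ∑ y ∈ s,
          ENNReal.ofReal (Real.exp (-2 * ∑ i, (-(y i)) * (ξ i : ℝ))) * v ξ := by
        simp_rw [Finset.sum_mul]
    _ = ∑ y ∈ s, ∑' ξ : Fin d → ℤ,
          ENNReal.ofReal (Real.exp (-2 * ∑ i, (-(y i)) * (ξ i : ℝ))) * v ξ :=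
        Summable.tsum_finsetSum fun y _ => ENNReal.summable
    _ ≤ ∑ y ∈ s, ENNReal.ofReal (M ^ 2) := by
        refine Finset.sum_le_sum fun y hy => ?_
        apply hv (fun i => -(y i))
        have h1 : Real.sqrt (∑ i, (-(y i)) ^ 2) = ‖y‖ := by
          rw [EuclideanSpace.norm_eq]
          congr 1
          refine Finset.sum_congr rfl fun i _ => by
            simp [Real.norm_eq_abs, sq_abs]
        rw [h1]
        exact lt_of_le_of_lt (hsn y hy) hδ'σ
    _ ≤ ENNReal.ofReal s.card * ENNReal.ofReal (M ^ 2) := by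
        rw [Finset.sum_const, nsmul_eq_mul, ENNReal.ofReal_natCast]
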